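/- Converse step in Lemma 3: let R be a domain satisfying the left Ore condition. Suppose X₁, Y₁, X₂ ∈ R are nonzero and X₁·M = Y₁·M₁, X₁·L = Y₁·Q₁, X₂·M₁ = Y₂·R₀, and X₂·Q₁ = Y₂·Q hold for elements M, L, M₁, Q₁, R₀, Q, Y₂ ∈ R. Then there exist U, V ∈ R with U ≠ 0 such that U·M = V·R₀ and U·L = V·Q. -/
import Mathlib

/-- Converse step in Lemma 3: in a domain with the left Ore condition, if
`X₁·M = Y₁·M₁`, `X₁·L = Y₁·Q₁`, `X₂·M₁ = Y₂·R₀` and `X₂·Q₁ = Y₂·Q`, then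
there is a nonzero `U` and a `V` with `U·M = V·R₀` and `U·L = V·Q`, i.e.
`(L, R₀)` is a generalized divisor couple for `M`. -/
theorem divisor_couple_converse
    {R : Type*} [Ring R] [IsDomain R]
    (ore : ∀ a b : R, a ≠ 0 → b ≠ 0 → ∃ c d : R, c * a = d * b ∧ c * a ≠ 0)
    (X₁ Y₁ X₂ M L M₁ Q₁ R₀ Q Y₂ : R)
    (hX₁ : X₁ ≠ 0) (hY₁ : Y₁ ≠ 0) (hX₂ : X₂ ≠ 0)
    (h1 : X₁ * M = Y₁ * M₁)
    (h2 : X₁ * L = Y₁ * Q₁)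
    (h3 : X₂ * M₁ = Y₂ * R₀)
    (h4 : X₂ * Q₁ = Y₂ * Q) :
    ∃ U V : R, U ≠ 0 ∧ U * M = V * R₀ ∧ U * L = V * Q := by
  obtain ⟨c, d, hcd, hne⟩ := ore Y₁ X₂ hY₁ hX₂
  have hc : c ≠ 0 := fun h => hne (by simp [h])
  refine ⟨c * X₁, d * Y₂, mul_ne_zero hc hX₁, ?_, ?_⟩
  · calc c * X₁ * M = c * (Y₁ * M₁) := by rw [mul_assoc, h1]
      _ = d * X₂ * M₁ := by rw [← mul_assoc, hcd]
      _ = d * Y₂ * R₀ := by rw [mul_assoc, h3, mul_assoc]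
  · calc c * X₁ * L = c * (Y₁ * Q₁) := by rw [mul_assoc, h2]
      _ = d * X₂ * Q₁ := by rw [← mul_assoc, hcd]
      _ = d * Y₂ * Q := by rw [mul_assoc, h4, mul_assoc]
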